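/- Let A and B be k-algebras that are free of ranks m and n over their centers C(A) and C(B) respectively (both k-flat). Then the regular trace on A ⊗ B satisfies tr(a ⊗ b) = tr(a) tr(b), and the discriminant of A ⊗ B over its center C(A) ⊗ C(B) equals d(A/C(A))^n · d(B/C(B))^m. -/

import Mathlib

open TensorProduct

section Aux

variable {k CA CB A B : Type*} [CommRing k]
    [CommRing CA] [CommRing CB] [Algebra k CA] [Algebra k CB]
    [Ring A] [Ring B] [Algebra k A] [Algebra k B]
    [Algebra CA A] [Algebra CB B] [IsScalarTower k CA A] [IsScalarTower k CB B]
    {ι κ : Type*}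
    (xa : Module.Basis ι CA A) (xb : Module.Basis κ CB B)

noncomputable def tEquiv : A ⊗[k] B ≃ₗ[k] (ι × κ →₀ CA ⊗[k] CB) :=
  (TensorProduct.congr (xa.repr.restrictScalars k) (xb.repr.restrictScalars k)).trans
    (finsuppTensorFinsupp k k CA CB ι κ)

lemma tEquiv_tmul_apply (x : A) (y : B) (i : ι) (j : κ) :
    tEquiv (k := k) xa xb (x ⊗ₜ[k] y) (i, j) = xa.repr x i ⊗ₜ[k] xb.repr y j := by
  simp [tEquiv]

variable [Algebra (CA ⊗[k] CB) (A ⊗[k] B)]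
variable (halg : ∀ c : CA ⊗[k] CB, algebraMap (CA ⊗[k] CB) (A ⊗[k] B) c =
      Algebra.TensorProduct.map (IsScalarTower.toAlgHom k CA A)
        (IsScalarTower.toAlgHom k CB B) c)

include halg

lemma tEquiv_smul (c : CA ⊗[k] CB) (z : A ⊗[k] B) :
    tEquiv (k := k) xa xb (c • z) = c • tEquiv (k := k) xa xb z := by
  have hsmul : ∀ (ca : CA) (cb : CB) (a : A) (b : B),
      (ca ⊗ₜ[k] cb) • (a ⊗ₜ[k] b) = (ca • a) ⊗ₜ[k] (cb • b) := by
    intro ca cb a b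
    rw [Algebra.smul_def, halg, Algebra.TensorProduct.map_tmul,
      Algebra.TensorProduct.tmul_mul_tmul]
    simp [Algebra.smul_def, IsScalarTower.coe_toAlgHom']
  induction c using TensorProduct.induction_on with
  | zero => simp
  | add c1 c2 h1 h2 => simp [add_smul, h1, h2]
  | tmul ca cb =>
    induction z using TensorProduct.induction_on with
    | zero => simp
    | add z1 z2 h1 h2 => simp [smul_add, h1, h2]
    | tmul a b =>
      rw [hsmul]
      ext ⟨i, j⟩
      rw [tEquiv_tmul_apply, Finsupp.smul_apply, tEquiv_tmul_apply,
        _root_.map_smul, _root_.map_smul, Finsupp.smul_apply, Finsupp.smul_apply,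
        smul_eq_mul, smul_eq_mul, smul_eq_mul, Algebra.TensorProduct.tmul_mul_tmul]

noncomputable def tBasis : Module.Basis (ι × κ) (CA ⊗[k] CB) (A ⊗[k] B) :=
  Module.Basis.ofRepr
    { toFun := tEquiv (k := k) xa xb
      map_add' := map_add _
      map_smul' := tEquiv_smul xa xb halg
      invFun := (tEquiv (k := k) xa xb).symm
      left_inv := (tEquiv (k := k) xa xb).left_inv
      right_inv := (tEquiv (k := k) xa xb).right_inv }

lemma tBasis_apply (p : ι × κ) :
    tBasis xa xb halg p = xa p.1 ⊗ₜ[k] xb p.2 := by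
  rw [Module.Basis.apply_eq_iff]
  show tEquiv (k := k) xa xb (xa p.1 ⊗ₜ[k] xb p.2) = Finsupp.single p 1
  simp [tEquiv, Algebra.TensorProduct.one_def]

lemma tBasis_repr_apply (z : A ⊗[k] B) (p : ι × κ) :
    (tBasis xa xb halg).repr z p = tEquiv (k := k) xa xb z p := rfl

include xa xb in
lemma tensor_trace [Fintype ι] [Fintype κ] [DecidableEq ι] [DecidableEq κ]
    (x : A) (y : B) :
    LinearMap.trace (CA ⊗[k] CB) (A ⊗[k] B)
        (LinearMap.mulLeft (CA ⊗[k] CB) (x ⊗ₜ[k] y)) =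
      (LinearMap.trace CA A (LinearMap.mulLeft CA x)) ⊗ₜ[k]
        (LinearMap.trace CB B (LinearMap.mulLeft CB y)) := by
  rw [LinearMap.trace_eq_matrix_trace (CA ⊗[k] CB) (tBasis xa xb halg),
    LinearMap.trace_eq_matrix_trace CA xa, LinearMap.trace_eq_matrix_trace CB xb,
    ← Matrix.trace_kroneckerTMul (R := k)]
  congr 1
  ext ⟨p1, p2⟩ ⟨q1, q2⟩
  rw [Matrix.kroneckerTMul_apply, LinearMap.toMatrix_apply, tBasis_apply,
    LinearMap.mulLeft_apply, Algebra.TensorProduct.tmul_mul_tmul,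
    tBasis_repr_apply, tEquiv_tmul_apply, LinearMap.toMatrix_apply,
    LinearMap.toMatrix_apply, LinearMap.mulLeft_apply, LinearMap.mulLeft_apply]

end Aux


/-- let `A`, `B` be `k`-algebras, free of ranks `m = |ι|`, `n = |κ|` over
their centers `C(A)`, `C(B)` (both `k`-flat).  Then the regular trace on `A ⊗ B` (over its
center `C(A) ⊗ C(B)`) satisfies `tr(a ⊗ b) = tr(a) tr(b)`, and the discriminant of
`A ⊗ B` over `C(A) ⊗ C(B)` equals `d(A/C(A))ⁿ · d(B/C(B))ᵐ`. -/
theorem discriminant_of_tensor_product {k CA CB A B : Type*} [CommRing k]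
    [CommRing CA] [CommRing CB] [Algebra k CA] [Algebra k CB]
    [Module.Flat k CA] [Module.Flat k CB]
    [Ring A] [Ring B] [Algebra k A] [Algebra k B]
    [Algebra CA A] [Algebra CB B] [IsScalarTower k CA A] [IsScalarTower k CB B]
    [Module.Free CA A] [Module.Finite CA A] [Module.Free CB B] [Module.Finite CB B]
    (hA : ∀ x : A, x ∈ Set.center A ↔ x ∈ Set.range (algebraMap CA A))
    (hB : ∀ x : B, x ∈ Set.center B ↔ x ∈ Set.range (algebraMap CB B))
    {ι κ : Type*} [Fintype ι] [Fintype κ] [DecidableEq ι] [DecidableEq κ]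
    (xa : Module.Basis ι CA A) (xb : Module.Basis κ CB B)
    [Algebra (CA ⊗[k] CB) (A ⊗[k] B)]
    (halg : ∀ c : CA ⊗[k] CB, algebraMap (CA ⊗[k] CB) (A ⊗[k] B) c =
      Algebra.TensorProduct.map (IsScalarTower.toAlgHom k CA A)
        (IsScalarTower.toAlgHom k CB B) c) :
    (∀ (x : A) (y : B),
      LinearMap.trace (CA ⊗[k] CB) (A ⊗[k] B)
          (LinearMap.mulLeft (CA ⊗[k] CB) (x ⊗ₜ[k] y)) =
        (LinearMap.trace CA A (LinearMap.mulLeft CA x)) ⊗ₜ[k]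
          (LinearMap.trace CB B (LinearMap.mulLeft CB y))) ∧
    Matrix.det (Matrix.of fun p q : ι × κ =>
        LinearMap.trace (CA ⊗[k] CB) (A ⊗[k] B)
          (LinearMap.mulLeft (CA ⊗[k] CB)
            ((xa p.1 ⊗ₜ[k] xb p.2) * (xa q.1 ⊗ₜ[k] xb q.2)))) =
      (Matrix.det (Matrix.of fun i j : ι =>
          LinearMap.trace CA A (LinearMap.mulLeft CA (xa i * xa j))) ^ Fintype.card κ)
        ⊗ₜ[k]
      (Matrix.det (Matrix.of fun i j : κ =>
          LinearMap.trace CB B (LinearMap.mulLeft CB (xb i * xb j))) ^ Fintype.card ι) := by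
  refine ⟨fun x y => tensor_trace xa xb halg x y, ?_⟩
  have hmat : (Matrix.of fun p q : ι × κ =>
      LinearMap.trace (CA ⊗[k] CB) (A ⊗[k] B)
        (LinearMap.mulLeft (CA ⊗[k] CB)
          ((xa p.1 ⊗ₜ[k] xb p.2) * (xa q.1 ⊗ₜ[k] xb q.2)))) =
      Matrix.kroneckerMap (TensorProduct.tmul k)
        (Matrix.of fun i j : ι =>
          LinearMap.trace CA A (LinearMap.mulLeft CA (xa i * xa j)))
        (Matrix.of fun i j : κ =>
          LinearMap.trace CB B (LinearMap.mulLeft CB (xb i * xb j))) := by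
    ext ⟨p1, p2⟩ ⟨q1, q2⟩
    rw [Matrix.kroneckerMap_apply]
    show LinearMap.trace (CA ⊗[k] CB) (A ⊗[k] B)
        (LinearMap.mulLeft (CA ⊗[k] CB)
          ((xa p1 ⊗ₜ[k] xb p2) * (xa q1 ⊗ₜ[k] xb q2))) = _
    rw [Algebra.TensorProduct.tmul_mul_tmul, tensor_trace xa xb halg]
    rfl
  rw [hmat, Matrix.det_kroneckerTMul]
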